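/- The Lie algebra D_n = Der_K(P_n) has trivial center and is perfect: Z(D_n) = 0 and [D_n, D_n] = D_n. -/

import Mathlib

open MvPolynomial

section Aux

variable {n : ℕ} {K : Type*} [Field K] [CharZero K]

/-- Applying a finite sum of derivations. -/
lemma derivation_sum_apply {ι : Type*} (s : Finset ι)
    (D : ι → Derivation K (MvPolynomial (Fin n) K) (MvPolynomial (Fin n) K))
    (a : MvPolynomial (Fin n) K) :
    (∑ k ∈ s, D k) a = ∑ k ∈ s, D k a := by
  classical
  induction s using Finset.induction_on with
  | empty => simp
  | insert _ _ h ih => simp [Finset.sum_insert h, ih]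

/-- Existence of antiderivatives in characteristic zero. -/
lemma exists_pderiv_eq (i : Fin n) (f : MvPolynomial (Fin n) K) :
    ∃ g : MvPolynomial (Fin n) K, pderiv i g = f := by
  induction f using MvPolynomial.induction_on' with
  | monomial s a =>
      refine ⟨monomial (s + Finsupp.single i 1) (a / (s i + 1)), ?_⟩
      rw [pderiv_monomial]
      have h1 : (s + Finsupp.single i 1) - Finsupp.single i 1 = s := by
        ext j
        by_cases hj : j = i <;> simp [hj, Finsupp.single_apply]
      have h2 : ((s + Finsupp.single i 1) : Fin n →₀ ℕ) i = s i + 1 := by simp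
      have h3 : ((s i : K) + 1) ≠ 0 := by
        have : (((s i + 1 : ℕ)) : K) ≠ 0 := Nat.cast_ne_zero.mpr (Nat.succ_ne_zero _)
        push_cast at this
        exact this
      rw [h1, h2]
      congr 1
      push_cast
      field_simp
  | add p q hp hq =>
      obtain ⟨g, hg⟩ := hp
      obtain ⟨h, hh⟩ := hq
      exact ⟨g + h, by simp [hg, hh]⟩

/-- Every derivation decomposes as `∑ k, D (X k) • ∂ₖ`. -/
lemma derivation_decomp (D : Derivation K (MvPolynomial (Fin n) K) (MvPolynomial (Fin n) K)) :
    D = ∑ k : Fin n, D (X k) • pderiv k := by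
  refine MvPolynomial.derivation_ext fun j => ?_
  rw [derivation_sum_apply]
  rw [Finset.sum_eq_single j]
  · simp
  · intro k _ hk
    simp [Derivation.smul_apply, pderiv_X_of_ne (Ne.symm hk)]
  · simp

end Aux

/-- D_n = Der_K(P_n) has trivial center and is perfect: Z(D_n) = 0 and [D_n, D_n] = D_n. -/
theorem derivation_lie_center_and_perfect (n : ℕ) (K : Type*) [Field K] [CharZero K] :
    LieAlgebra.center K (Derivation K (MvPolynomial (Fin n) K) (MvPolynomial (Fin n) K)) = ⊥ ∧
    ⁅(⊤ : LieIdeal K (Derivation K (MvPolynomial (Fin n) K) (MvPolynomial (Fin n) K))),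
      (⊤ : LieIdeal K (Derivation K (MvPolynomial (Fin n) K) (MvPolynomial (Fin n) K)))⁆ = ⊤ := by
  constructor
  · -- trivial center
    rw [eq_bot_iff]
    intro D hD
    have h : ∀ E : Derivation K (MvPolynomial (Fin n) K) (MvPolynomial (Fin n) K),
        ⁅E, D⁆ = 0 := (LieModule.mem_maxTrivSubmodule K _ _ D).mp hD
    have hX : ∀ k : Fin n, D (X k) = 0 := by
      intro k
      -- all partial derivatives of D (X k) vanish
      have hpd : ∀ j : Fin n, pderiv j (D (X k)) = 0 := by
        intro j
        have := congrArg (fun E : Derivation K (MvPolynomial (Fin n) K)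
          (MvPolynomial (Fin n) K) => E (X k)) (h (pderiv j))
        simp only [Derivation.commutator_apply, Derivation.zero_apply] at this
        by_cases hjk : j = k
        · subst hjk
          rw [pderiv_X_self, Derivation.map_one_eq_zero, sub_zero] at this
          exact this
        · rw [pderiv_X_of_ne (Ne.symm hjk), map_zero, sub_zero] at this
          exact this
      -- use the Euler derivation
      set E : Derivation K (MvPolynomial (Fin n) K) (MvPolynomial (Fin n) K) :=
        ∑ j : Fin n, (X j : MvPolynomial (Fin n) K) • pderiv j with hE
      have hEX : E (X k) = X k := by
        rw [hE, derivation_sum_apply, Finset.sum_eq_single k]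
        · simp
        · intro j _ hj
          simp [Derivation.smul_apply, pderiv_X_of_ne (Ne.symm hj)]
        · simp
      have hEf : E (D (X k)) = 0 := by
        rw [hE, derivation_sum_apply]
        refine Finset.sum_eq_zero fun j _ => ?_
        rw [Derivation.smul_apply, hpd j, smul_zero]
      have := congrArg (fun F : Derivation K (MvPolynomial (Fin n) K)
        (MvPolynomial (Fin n) K) => F (X k)) (h E)
      simp only [Derivation.commutator_apply, Derivation.zero_apply] at this
      rw [hEf, hEX, zero_sub, neg_eq_zero] at this
      exact this
    show D ∈ (⊥ : LieIdeal K _)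
    rw [LieSubmodule.mem_bot]
    exact MvPolynomial.derivation_ext fun i => by simp [hX i]
  · -- perfect
    rw [eq_top_iff]
    intro D _
    rw [derivation_decomp D]
    refine sum_mem fun k _ => ?_
    obtain ⟨g, hg⟩ := exists_pderiv_eq k (D (X k))
    have key : D (X k) • (pderiv k : Derivation K (MvPolynomial (Fin n) K)
        (MvPolynomial (Fin n) K)) =
        ⁅(pderiv k : Derivation K (MvPolynomial (Fin n) K) (MvPolynomial (Fin n) K)),
          g • pderiv k⁆ := by
      ext x
      rw [Derivation.commutator_apply, Derivation.smul_apply, Derivation.smul_apply,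
        Derivation.smul_apply]
      rw [smul_eq_mul, smul_eq_mul, smul_eq_mul, pderiv_mul, hg]
      ring
    rw [key]
    exact LieSubmodule.lie_mem_lie (LieSubmodule.mem_top _) (LieSubmodule.mem_top _)
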